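/- The washout point E0 = (S_in, 0, 0) is an equilibrium of the model, the Jacobian matrix of the model at E0 is J0 = [[−D, −f(S_in)/y_u, −g(S_in)/y_v], [0, f(S_in) − D_u, b], [0, 0, g(S_in) − D_v − b]], and every complex eigenvalue of J0 has negative real part if and only if f(S_in) < D_u and g(S_in) < D_v + b (equivalently, S_in < min(λ_u, λ_b) when λ_u and λ_b exist). -/

import Mathlib

open Matrix

/-- `E0 = (Sin, 0, 0)` is an equilibrium, the Jacobian of the model
at `E0` is the matrix `J0`, and all complex eigenvalues of `J0` have negative
real part iff `f Sin < Du` and `g Sin < Dv + b` (equivalently `Sin < min lu lb`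
when the break-even concentrations `lu`, `lb` exist). -/
theorem washout_equilibrium_jacobian_and_stability
    (f g : ℝ → ℝ) (D Sin a b yu yv Du Dv : ℝ)
    (hD : 0 < D) (hSin : 0 < Sin) (ha : 0 < a) (hb : 0 < b)
    (hyu : 0 < yu) (hyv : 0 < yv) (hDu : 0 < Du) (hDv : 0 < Dv)
    (hfC : ContDiffOn ℝ 1 f (Set.Ici 0)) (hgC : ContDiffOn ℝ 1 g (Set.Ici 0))
    (hf0 : f 0 = 0) (hg0 : g 0 = 0)
    (hf' : ∀ S > (0:ℝ), 0 < deriv f S) (hg' : ∀ S > (0:ℝ), 0 < deriv g S)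
    (F : (Fin 3 → ℝ) → (Fin 3 → ℝ))
    (hF : ∀ x, F x =
      ![D * (Sin - x 0) - (1/yu) * f (x 0) * x 1 - (1/yv) * g (x 0) * x 2,
        (f (x 0) - Du) * x 1 - a * (x 1 + x 2) * x 1 + b * x 2,
        (g (x 0) - Dv) * x 2 + a * (x 1 + x 2) * x 1 - b * x 2])
    (J0 : Matrix (Fin 3) (Fin 3) ℝ)
    (hJ0 : J0 = !![-D, -(f Sin)/yu, -(g Sin)/yv;
                   0, f Sin - Du, b;
                   0, 0, g Sin - Dv - b]) :
    F ![Sin, 0, 0] = 0 ∧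
    HasFDerivAt F (Matrix.mulVecLin J0).toContinuousLinearMap ![Sin, 0, 0] ∧
    ((∀ μ : ℂ, μ ∈ spectrum ℂ (J0.map (algebraMap ℝ ℂ)) → μ.re < 0) ↔
      (f Sin < Du ∧ g Sin < Dv + b)) ∧
    (∀ lu lb : ℝ, 0 < lu → f lu = Du → 0 < lb → g lb = Dv + b →
      ((f Sin < Du ∧ g Sin < Dv + b) ↔ Sin < min lu lb)) := by
  refine ⟨?_, ?_, ?_, ?_⟩
  · rw [hF]
    funext i
    fin_cases i <;> simp
  · -- Jacobian
    have hE0 : (![Sin, 0, 0] : Fin 3 → ℝ) 0 = Sin := rfl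
    have hE1 : (![Sin, 0, 0] : Fin 3 → ℝ) 1 = 0 := rfl
    have hE2 : (![Sin, 0, 0] : Fin 3 → ℝ) 2 = 0 := rfl
    set E0 : Fin 3 → ℝ := ![Sin, 0, 0] with hE0def
    have hfd : HasDerivAt f (deriv f Sin) Sin :=
      ((hfC.contDiffAt (Ici_mem_nhds hSin)).differentiableAt one_ne_zero).hasDerivAt
    have hgd : HasDerivAt g (deriv g Sin) Sin :=
      ((hgC.contDiffAt (Ici_mem_nhds hSin)).differentiableAt one_ne_zero).hasDerivAt
    set p0 : (Fin 3 → ℝ) →L[ℝ] ℝ := ContinuousLinearMap.proj 0 with hp0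
    set p1 : (Fin 3 → ℝ) →L[ℝ] ℝ := ContinuousLinearMap.proj 1 with hp1
    set p2 : (Fin 3 → ℝ) →L[ℝ] ℝ := ContinuousLinearMap.proj 2 with hp2
    have h0a : HasFDerivAt (fun x : Fin 3 → ℝ => x 0) p0 E0 := hasFDerivAt_apply 0 E0
    have h1a : HasFDerivAt (fun x : Fin 3 → ℝ => x 1) p1 E0 := hasFDerivAt_apply 1 E0
    have h2a : HasFDerivAt (fun x : Fin 3 → ℝ => x 2) p2 E0 := hasFDerivAt_apply 2 E0
    have hfx : HasFDerivAt (fun x : Fin 3 → ℝ => f (x 0)) (deriv f Sin • p0) E0 :=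
      hfd.comp_hasFDerivAt_of_eq E0 h0a hE0.symm
    have hgx : HasFDerivAt (fun x : Fin 3 → ℝ => g (x 0)) (deriv g Sin • p0) E0 :=
      hgd.comp_hasFDerivAt_of_eq E0 h0a hE0.symm
    rw [show F = (fun x : Fin 3 → ℝ =>
      ![D * (Sin - x 0) - (1/yu) * f (x 0) * x 1 - (1/yv) * g (x 0) * x 2,
        (f (x 0) - Du) * x 1 - a * (x 1 + x 2) * x 1 + b * x 2,
        (g (x 0) - Dv) * x 2 + a * (x 1 + x 2) * x 1 - b * x 2]) from funext hF]
    apply hasFDerivAt_pi''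
    intro i
    fin_cases i
    · -- component 0
      have h := ((((hasFDerivAt_const Sin E0).sub h0a).const_mul D).sub
          ((hfx.const_mul (1/yu)).mul h1a)).sub
          ((hgx.const_mul (1/yv)).mul h2a)
      refine (h.congr_fderiv ?_).congr_of_eventuallyEq
        (Filter.Eventually.of_forall fun x => ?_)
      · refine ContinuousLinearMap.ext fun v => ?_
        simp [hJ0, hp0, hp1, hp2, hE0, hE1, hE2, Matrix.mulVec, dotProduct,
          Fin.sum_univ_three, ContinuousLinearMap.proj_apply]
        try ring
      · simp
    · -- component 1
      have h := (((hfx.sub (hasFDerivAt_const Du E0)).mul h1a).sub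
          (((h1a.add h2a).const_mul a).mul h1a)).add (h2a.const_mul b)
      refine (h.congr_fderiv ?_).congr_of_eventuallyEq
        (Filter.Eventually.of_forall fun x => ?_)
      · refine ContinuousLinearMap.ext fun v => ?_
        simp [hJ0, hp0, hp1, hp2, hE0, hE1, hE2, Matrix.mulVec, dotProduct,
          Fin.sum_univ_three, ContinuousLinearMap.proj_apply]
        try ring
      · simp
    · -- component 2
      have h := (((hgx.sub (hasFDerivAt_const Dv E0)).mul h2a).add
          (((h1a.add h2a).const_mul a).mul h1a)).sub (h2a.const_mul b)
      refine (h.congr_fderiv ?_).congr_of_eventuallyEq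
        (Filter.Eventually.of_forall fun x => ?_)
      · refine ContinuousLinearMap.ext fun v => ?_
        simp [hJ0, hp0, hp1, hp2, hE0, hE1, hE2, Matrix.mulVec, dotProduct,
          Fin.sum_univ_three, ContinuousLinearMap.proj_apply]
        try ring
      · simp
  · -- spectrum characterization
    set M := J0.map (algebraMap ℝ ℂ) with hM
    have hspec : ∀ μ : ℂ, μ ∈ spectrum ℂ M ↔
        (μ = ((-D : ℝ) : ℂ) ∨ μ = ((f Sin - Du : ℝ) : ℂ) ∨ μ = ((g Sin - Dv - b : ℝ) : ℂ)) := by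
      intro μ
      rw [spectrum.mem_iff]
      have hmat : algebraMap ℂ (Matrix (Fin 3) (Fin 3) ℂ) μ - M =
          !![μ + D, (f Sin)/yu, (g Sin)/yv;
             0, μ - ((f Sin - Du : ℝ) : ℂ), -b;
             0, 0, μ - ((g Sin - Dv - b : ℝ) : ℂ)] := by
        rw [hM, hJ0]
        ext i j
        fin_cases i <;> fin_cases j <;>
          simp [Matrix.algebraMap_matrix_apply, Matrix.vecHead, Matrix.vecTail] <;> push_cast <;> ring
      have hdet : (algebraMap ℂ (Matrix (Fin 3) (Fin 3) ℂ) μ - M).det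
          = (μ + D) * ((μ - ((f Sin - Du : ℝ) : ℂ)) * (μ - ((g Sin - Dv - b : ℝ) : ℂ))) := by
        rw [hmat, Matrix.det_fin_three]
        simp [Matrix.vecHead, Matrix.vecTail]
        try ring
      rw [Matrix.isUnit_iff_isUnit_det, isUnit_iff_ne_zero, not_ne_iff, hdet,
        mul_eq_zero, mul_eq_zero, add_eq_zero_iff_eq_neg, sub_eq_zero, sub_eq_zero]
      push_cast
      tauto
    constructor
    · intro h
      constructor
      · have := h _ ((hspec _).mpr (Or.inr (Or.inl rfl)))
        simp only [Complex.ofReal_re] at this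
        linarith
      · have := h _ ((hspec _).mpr (Or.inr (Or.inr rfl)))
        simp only [Complex.ofReal_re] at this
        linarith
    · rintro ⟨h1, h2⟩ μ hμ
      rcases (hspec μ).mp hμ with h | h | h <;> rw [h] <;>
        simp only [Complex.ofReal_re] <;> linarith
  · -- break-even concentrations
    intro lu lb hlu hflu hlb hglb
    have hmf : StrictMonoOn f (Set.Ici 0) := by
      apply strictMonoOn_of_deriv_pos (convex_Ici 0) hfC.continuousOn
      intro x hx
      rw [interior_Ici] at hx
      exact hf' x hx
    have hmg : StrictMonoOn g (Set.Ici 0) := by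
      apply strictMonoOn_of_deriv_pos (convex_Ici 0) hgC.continuousOn
      intro x hx
      rw [interior_Ici] at hx
      exact hg' x hx
    rw [lt_min_iff, ← hflu, ← hglb,
      hmf.lt_iff_lt (Set.mem_Ici.mpr hSin.le) (Set.mem_Ici.mpr hlu.le),
      hmg.lt_iff_lt (Set.mem_Ici.mpr hSin.le) (Set.mem_Ici.mpr hlb.le)]
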